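/- arXiv:2102.03745 — 2 statements merged into one kernel-verified Lean document; each statement's English description precedes it below -/
import Mathlib

section
/- Let α be a finite type with at least two elements, let β be a linear order, and let W : α → α → β be symmetric (W i j = W j i for all i, j). Then there exist x ≠ y in α such that W x y ≤ W x k for every k ≠ x and W y x ≤ W y k for every k ≠ y. -/
theorem pairing_algorithm_general {α : Type*} [Fintype α] [Nontrivial α]
    {β : Type*} [LinearOrder β] (W : α → α → β)
    (hsymm : ∀ i j : α, W i j = W j i) :
    ∃ x y : α, x ≠ y ∧
      (∀ k : α, k ≠ x → W x y ≤ W x k) ∧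
      (∀ k : α, k ≠ y → W y x ≤ W y k) := by
  classical
  obtain ⟨a, b, hab⟩ := exists_pair_ne α
  have hne : (Finset.univ.filter (fun p : α × α => p.1 ≠ p.2)).Nonempty :=
    ⟨(a, b), by simp [hab]⟩
  obtain ⟨p, hp, hmin⟩ := Finset.exists_min_image _ (fun p : α × α => W p.1 p.2) hne
  simp only [Finset.mem_filter, Finset.mem_univ, true_and] at hp hmin
  refine ⟨p.1, p.2, hp, ?_, ?_⟩
  · intro k hk
    exact hmin (p.1, k) (Ne.symm hk)
  · intro k hk
    have := hmin (p.2, k) (Ne.symm hk)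
    rw [hsymm p.2 p.1]; exact this
end

section
/- Let n ≥ 2, let W : Fin n → Fin n → ℝ be symmetric (W i j = W j i for all i, j), and suppose c : Fin n → Fin n assigns to each row i its unique strict off-diagonal minimizer, i.e. for every i one has c i ≠ i and W i (c i) < W i k for every k with k ≠ i and k ≠ c i. Then there exists an index i such that c (c i) = i. -/
theorem argmin_map_has_two_cycle (n : ℕ) (hn : 2 ≤ n) (W : Fin n → Fin n → ℝ)
    (hsymm : ∀ i j : Fin n, W i j = W j i) (c : Fin n → Fin n)
    (hc : ∀ i : Fin n, c i ≠ i ∧ ∀ k : Fin n, k ≠ i → k ≠ c i → W i (c i) < W i k) :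
    ∃ i : Fin n, c (c i) = i := by
  have hne : (Finset.univ : Finset (Fin n)).Nonempty := by
    have : 0 < n := by omega
    exact ⟨⟨0, this⟩, Finset.mem_univ _⟩
  obtain ⟨i, -, hmin⟩ := Finset.exists_min_image Finset.univ (fun i => W i (c i)) hne
  refine ⟨i, ?_⟩
  by_contra h
  set j := c i with hj
  have hji : j ≠ i := (hc i).1
  have hij : i ≠ c j := fun e => h e.symm
  have h1 : W j (c j) < W j i := (hc j).2 i (Ne.symm hji) hij
  have h2 : W j i = W i (c i) := by rw [hsymm]
  have h3 : W i (c i) ≤ W j (c j) := hmin j (Finset.mem_univ _)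
  linarith
end
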